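/- Let {Q_i}_{i=1}^{n+1} be n+1 pairwise disjoint nonempty subsets of V, Q* the complement of their union, and for each pair j < k set T_{j,k} := (1/n)( ∂(Q_j ∪ Q_k)/π(Q_j ∪ Q_k) + ∑_{i≠j,k} ∂(Q_i)/π(Q_i) ). Then min_{j<k} T_{j,k} ≤ ∂(Q*)/(n²(1−π(Q*))) + ((n−1)/n²) ∑_{i=1}^{n+1} ∂(Q_i)/π(Q_i), provided π(Q*) < 1. -/

import Mathlib

open Finset

/-- Outgoing boundary flow `∂(Q) = ∑_{u∈Q, v∉Q} K(u,v)π(u)`. -/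
noncomputable def dpart {V : Type*} [Fintype V] [DecidableEq V]
    (K : V → V → ℝ) (π : V → ℝ) (Q : Finset V) : ℝ :=
  ∑ u ∈ Q, ∑ v ∈ Qᶜ, K u v * π u

/-- `π(Q) = ∑_{u∈Q} π(u)`. -/
noncomputable def pim {V : Type*} (π : V → ℝ) (Q : Finset V) : ℝ :=
  ∑ u ∈ Q, π u

section helpers

variable {V : Type*} [Fintype V] [DecidableEq V] (K : V → V → ℝ) (π : V → ℝ)

/-- Flow from `A` to `B`. -/
noncomputable def Ff (A B : Finset V) : ℝ := ∑ u ∈ A, ∑ v ∈ B, K u v * π u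

lemma Ff_right_univ (hK1 : ∀ u, ∑ v, K u v = 1) (A : Finset V) :
    Ff K π A Finset.univ = pim π A := by
  unfold Ff pim
  refine Finset.sum_congr rfl fun u _ => ?_
  rw [← Finset.sum_mul, hK1, one_mul]

lemma Ff_left_univ (hstat : ∀ v, ∑ u, π u * K u v = π v) (A : Finset V) :
    Ff K π Finset.univ A = pim π A := by
  unfold Ff pim
  rw [Finset.sum_comm]
  refine Finset.sum_congr rfl fun v _ => ?_
  rw [← hstat v]
  exact Finset.sum_congr rfl fun u _ => mul_comm _ _

lemma dpart_eq_sub (hK1 : ∀ u, ∑ v, K u v = 1) (A : Finset V) :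
    dpart K π A = pim π A - Ff K π A A := by
  have h : ∀ u, ∑ v ∈ Aᶜ, K u v * π u
      = (∑ v, K u v * π u) - ∑ v ∈ A, K u v * π u := by
    intro u
    rw [← Finset.sum_compl_add_sum A (fun v => K u v * π u)]
    ring
  unfold dpart
  rw [Finset.sum_congr rfl fun u _ => h u, Finset.sum_sub_distrib]
  have h2 : (∑ u ∈ A, ∑ v, K u v * π u) = pim π A := Ff_right_univ K π hK1 A
  rw [h2]
  rfl

lemma Ff_compl_left (A B : Finset V) :
    Ff K π Aᶜ B = Ff K π Finset.univ B - Ff K π A B := by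
  unfold Ff
  rw [← Finset.sum_compl_add_sum A (fun u => ∑ v ∈ B, K u v * π u)]
  ring

lemma sum_offDiag_fin {m : ℕ} (f : Fin m × Fin m → ℝ) :
    ∑ p ∈ (Finset.univ : Finset (Fin m)).offDiag, f p
      = (∑ j, ∑ k, f (j, k)) - ∑ j, f (j, j) := by
  rw [show (Finset.univ : Finset (Fin m)).offDiag = (Finset.univ ×ˢ Finset.univ).filter
      (fun a : Fin m × Fin m => a.1 ≠ a.2) by ext x; simp [Finset.mem_offDiag],
    Finset.sum_filter, Finset.sum_product]
  have h : ∀ j : Fin m, (∑ k, if (j, k).1 ≠ (j, k).2 then f (j, k) else 0)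
      = (∑ k, f (j, k)) - f (j, j) := by
    intro j
    have h2 : ∀ k : Fin m, (if (j, k).1 ≠ (j, k).2 then f (j, k) else 0)
        = f (j, k) - (if j = k then f (j, k) else 0) := by
      intro k
      by_cases h : j = k <;> simp [h]
    rw [Finset.sum_congr rfl fun k _ => h2 k, Finset.sum_sub_distrib,
      Finset.sum_ite_eq]
    simp
  rw [Finset.sum_congr rfl fun j _ => h j, Finset.sum_sub_distrib]

end helpers

theorem min_Tjk_bound {V : Type*} [Fintype V] [DecidableEq V]
    (K : V → V → ℝ) (π : V → ℝ)
    (hK0 : ∀ u v, 0 ≤ K u v) (hK1 : ∀ u, ∑ v, K u v = 1)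
    (hπ : ∀ u, 0 < π u) (hπ1 : ∑ u, π u = 1)
    (hstat : ∀ v, ∑ u, π u * K u v = π v)
    (n : ℕ) (hn : 0 < n) (Q : Fin (n + 1) → Finset V)
    (hQne : ∀ i, (Q i).Nonempty)
    (hQdisj : Pairwise (Function.onFun Disjoint Q))
    (Qs : Finset V) (hQs : Qs = (Finset.univ.biUnion Q)ᶜ)
    (hQs1 : pim π Qs < 1)
    (T : Fin (n + 1) → Fin (n + 1) → ℝ)
    (hT : ∀ j k, j ≠ k → T j k = (1 / (n : ℝ)) *
      (dpart K π (Q j ∪ Q k) / pim π (Q j ∪ Q k)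
        + ∑ i ∈ (Finset.univ.erase j).erase k, dpart K π (Q i) / pim π (Q i))) :
    ∃ j k, j ≠ k ∧ T j k ≤
      dpart K π Qs / ((n : ℝ) ^ 2 * (1 - pim π Qs))
        + (((n : ℝ) - 1) / (n : ℝ) ^ 2) * ∑ i, dpart K π (Q i) / pim π (Q i) := by
  classical
  have hd : Set.PairwiseDisjoint (↑(Finset.univ : Finset (Fin (n+1)))) Q :=
    fun i _ j _ hij => hQdisj hij
  set U : Finset V := Finset.univ.biUnion Q with hU
  have hPipos : ∀ i, 0 < pim π (Q i) :=
    fun i => Finset.sum_pos (fun u _ => hπ u) (hQne i)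
  set W : ℝ := ∑ i, pim π (Q i) with hW
  set S : ℝ := ∑ i, dpart K π (Q i) / pim π (Q i) with hS
  set G : ℝ := ∑ j, ∑ k, Ff K π (Q j) (Q k) with hG
  set sD : ℝ := ∑ i, dpart K π (Q i) with hsD
  -- π(U) = W
  have hpimU : pim π U = W := by
    rw [hU, hW]
    exact Finset.sum_biUnion hd
  -- 1 - π(Qs) = W
  have hcompl : pim π Qs = 1 - W := by
    rw [hQs, ← hpimU, ← hπ1]
    have := Finset.sum_compl_add_sum U (fun u => π u)
    unfold pim
    rw [hU] at this ⊢
    linarith [this]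
  have hWpos : 0 < W := by
    rw [hcompl] at hQs1; linarith
  have hn' : (0 : ℝ) < (n : ℝ) := by exact_mod_cast hn
  -- Ff U U = G
  have hFUU : Ff K π U U = G := by
    rw [hU, hG]
    unfold Ff
    rw [Finset.sum_biUnion hd]
    refine Finset.sum_congr rfl fun j _ => ?_
    have : ∀ u, ∑ v ∈ Finset.univ.biUnion Q, K u v * π u
        = ∑ k, ∑ v ∈ Q k, K u v * π u := fun u => Finset.sum_biUnion hd
    rw [Finset.sum_congr rfl fun u _ => this u, Finset.sum_comm]
  -- ∂(Q*) = W - G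
  have hDstar : dpart K π Qs = W - G := by
    have h1 : dpart K π Qs = Ff K π Uᶜ U := by
      rw [hQs]
      unfold dpart Ff
      rw [compl_compl]
    rw [h1, Ff_compl_left, Ff_left_univ K π hstat, hpimU, hFUU]
  -- D i = π_i - F i i
  have hDi : ∀ i, dpart K π (Q i) = pim π (Q i) - Ff K π (Q i) (Q i) :=
    fun i => dpart_eq_sub K π hK1 (Q i)
  -- diag sum of F
  have hdiagF : ∑ j, Ff K π (Q j) (Q j) = W - sD := by
    rw [hW, hsD, ← Finset.sum_sub_distrib]
    exact Finset.sum_congr rfl fun i _ => by rw [hDi i]; ring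
  -- π_i * a_i = D_i
  have hPia : ∀ i, pim π (Q i) * (dpart K π (Q i) / pim π (Q i)) = dpart K π (Q i) :=
    fun i => mul_div_cancel₀ _ (hPipos i).ne'
  -- the bound
  set B : ℝ := dpart K π Qs / ((n : ℝ) ^ 2 * (1 - pim π Qs))
      + (((n : ℝ) - 1) / (n : ℝ) ^ 2) * S with hB
  -- pointwise identity on off-diagonal pairs
  have hpt : ∀ j k : Fin (n+1), j ≠ k →
      (pim π (Q j) + pim π (Q k)) * T j k
        = (1/(n:ℝ)) * ((dpart K π (Q j) + dpart K π (Q k)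
            - Ff K π (Q j) (Q k) - Ff K π (Q k) (Q j))
          + (pim π (Q j) + pim π (Q k))
            * (S - dpart K π (Q j) / pim π (Q j) - dpart K π (Q k) / pim π (Q k))) := by
    intro j k hjk
    have hdjk : Disjoint (Q j) (Q k) := hQdisj hjk
    have hpimu : pim π (Q j ∪ Q k) = pim π (Q j) + pim π (Q k) :=
      Finset.sum_union hdjk
    have hdU : dpart K π (Q j ∪ Q k)
        = dpart K π (Q j) + dpart K π (Q k)
          - Ff K π (Q j) (Q k) - Ff K π (Q k) (Q j) := by
      rw [dpart_eq_sub K π hK1, hpimu, hDi j, hDi k]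
      have hFuu : Ff K π (Q j ∪ Q k) (Q j ∪ Q k)
          = Ff K π (Q j) (Q j) + Ff K π (Q j) (Q k)
            + Ff K π (Q k) (Q j) + Ff K π (Q k) (Q k) := by
        unfold Ff
        rw [Finset.sum_union hdjk]
        have h1 : ∀ u : V, ∑ v ∈ Q j ∪ Q k, K u v * π u
            = (∑ v ∈ Q j, K u v * π u) + ∑ v ∈ Q k, K u v * π u :=
          fun u => Finset.sum_union hdjk
        rw [Finset.sum_congr rfl fun u _ => h1 u,
            Finset.sum_congr (rfl : Q k = Q k) fun u _ => h1 u,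
            Finset.sum_add_distrib, Finset.sum_add_distrib]
        ring
      rw [hFuu]; ring
    have herase : ∑ i ∈ (Finset.univ.erase j).erase k,
        dpart K π (Q i) / pim π (Q i)
        = S - dpart K π (Q j) / pim π (Q j) - dpart K π (Q k) / pim π (Q k) := by
      have hkmem : k ∈ Finset.univ.erase j :=
        Finset.mem_erase.2 ⟨Ne.symm hjk, Finset.mem_univ k⟩
      rw [Finset.sum_erase_eq_sub hkmem,
        Finset.sum_erase_eq_sub (Finset.mem_univ j), hS]
    have hpos : (0:ℝ) < pim π (Q j) + pim π (Q k) := by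
      have := hPipos j; have := hPipos k; linarith
    rw [hT j k hjk, hpimu, hdU, herase]
    field_simp
  -- the off-diagonal index set is nonempty
  have hzo : ((⟨0, by omega⟩ : Fin (n+1)), (⟨1, by omega⟩ : Fin (n+1))) ∈
      (Finset.univ : Finset (Fin (n+1))).offDiag := by
    simp [Finset.mem_offDiag, Fin.ext_iff]
  have hoffne : (Finset.univ : Finset (Fin (n+1))).offDiag.Nonempty := ⟨_, hzo⟩
  -- sum over off-diagonal of weighted T equals sum of weighted B
  have hsum : ∑ p ∈ (Finset.univ : Finset (Fin (n+1))).offDiag,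
        (pim π (Q p.1) + pim π (Q p.2)) * T p.1 p.2
      = ∑ p ∈ (Finset.univ : Finset (Fin (n+1))).offDiag,
        (pim π (Q p.1) + pim π (Q p.2)) * B := by
    have hL : ∑ p ∈ (Finset.univ : Finset (Fin (n+1))).offDiag,
        (pim π (Q p.1) + pim π (Q p.2)) * T p.1 p.2
        = ∑ p ∈ (Finset.univ : Finset (Fin (n+1))).offDiag,
          (1/(n:ℝ)) * ((dpart K π (Q p.1) + dpart K π (Q p.2)
            - Ff K π (Q p.1) (Q p.2) - Ff K π (Q p.2) (Q p.1))
          + (pim π (Q p.1) + pim π (Q p.2))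
            * (S - dpart K π (Q p.1) / pim π (Q p.1)
               - dpart K π (Q p.2) / pim π (Q p.2))) := by
      refine Finset.sum_congr rfl fun p hp => ?_
      exact hpt p.1 p.2 (Finset.mem_offDiag.1 hp).2.2
    rw [hL, sum_offDiag_fin, sum_offDiag_fin]
    dsimp only
    have hGsymm : ∑ j, ∑ k, Ff K π (Q k) (Q j) = G := by
      rw [hG]; exact Finset.sum_comm
    have hPiaS : ∑ i, pim π (Q i) * (dpart K π (Q i) / pim π (Q i)) = sD := by
      rw [hsD]; exact Finset.sum_congr rfl fun i _ => hPia i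
    have e : ∀ j k : Fin (n+1),
        (1/(n:ℝ)) * (dpart K π (Q j) + dpart K π (Q k)
            - Ff K π (Q j) (Q k) - Ff K π (Q k) (Q j) +
          (pim π (Q j) + pim π (Q k))
            * (S - dpart K π (Q j) / pim π (Q j) - dpart K π (Q k) / pim π (Q k)))
        = (1/(n:ℝ)) * dpart K π (Q j) + (1/(n:ℝ)) * dpart K π (Q k)
          - (1/(n:ℝ)) * Ff K π (Q j) (Q k) - (1/(n:ℝ)) * Ff K π (Q k) (Q j)
          + ((1/(n:ℝ)) * S) * pim π (Q j) + ((1/(n:ℝ)) * S) * pim π (Q k)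
          - (1/(n:ℝ)) * (pim π (Q j) * (dpart K π (Q j) / pim π (Q j)))
          - (1/(n:ℝ)) * (pim π (Q k) * (dpart K π (Q k) / pim π (Q k)))
          - ((1/(n:ℝ)) * pim π (Q j)) * (dpart K π (Q k) / pim π (Q k))
          - ((1/(n:ℝ)) * (dpart K π (Q j) / pim π (Q j))) * pim π (Q k) := by
      intro j k; ring
    rw [Finset.sum_congr rfl fun j _ => Finset.sum_congr rfl fun k _ => e j k,
        Finset.sum_congr rfl fun j _ => e j j]
    simp only [add_mul, Finset.sum_add_distrib, Finset.sum_sub_distrib,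
      ← Finset.mul_sum, ← Finset.sum_mul, Finset.sum_const, Finset.card_univ,
      Fintype.card_fin, nsmul_eq_mul]
    rw [← hG, hGsymm, hPiaS, ← hsD, ← hW, ← hS]
    have r1 : ∑ i : Fin (n+1), pim π (Q i)
        * ((↑(n + 1) : ℝ) * (dpart K π (Q i) / pim π (Q i)))
        = (↑(n + 1) : ℝ) * sD := by
      rw [← hPiaS, Finset.mul_sum]
      exact Finset.sum_congr rfl fun i _ => by ring
    have r2 : ∑ x : Fin (n+1), 1 / (n:ℝ) * pim π (Q x)
        * (dpart K π (Q x) / pim π (Q x)) = 1 / (n:ℝ) * sD := by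
      rw [← hPiaS, Finset.mul_sum]
      exact Finset.sum_congr rfl fun i _ => by ring
    have r3 : ∑ x : Fin (n+1), 1 / (n:ℝ) * (dpart K π (Q x) / pim π (Q x))
        * pim π (Q x) = 1 / (n:ℝ) * sD := by
      rw [← hPiaS, Finset.mul_sum]
      exact Finset.sum_congr rfl fun i _ => by ring
    rw [r1, r2, r3, hdiagF, hB, hDstar, hcompl]
    have h1W : 1 - (1 - W) = W := by ring
    rw [h1W]
    push_cast
    field_simp
    ring
  obtain ⟨p, hp, hple⟩ := Finset.exists_le_of_sum_le hoffne (le_of_eq hsum)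
  obtain ⟨-, -, hpne⟩ := Finset.mem_offDiag.1 hp
  refine ⟨p.1, p.2, hpne, ?_⟩
  have hpos : (0:ℝ) < pim π (Q p.1) + pim π (Q p.2) := by
    have := hPipos p.1; have := hPipos p.2; linarith
  have hfin := le_of_mul_le_mul_left
    (by linarith [hple] :
      (pim π (Q p.1) + pim π (Q p.2)) * T p.1 p.2
        ≤ (pim π (Q p.1) + pim π (Q p.2)) * B) hpos
  rw [hB, hS] at hfin
  exact hfin
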